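/- arXiv:2408.15478 — 2 statements merged into one kernel-verified Lean document; each statement's English description precedes it below -/
import Mathlib

section
/- Every element h of the subgroup H of J₃ generated by s₁₂ and s₂₃ can be written in exactly one of the forms h = (s₁₂·s₂₃)ⁿ or h = (s₁₂·s₂₃)ⁿ·s₁₂ for a unique integer n, and these two families of elements are disjoint. -/
/-- Generators of the cactus group `J₃`. -/
inductive CactusGen : Type
  | s12 | s23 | s13
  deriving DecidableEq

open FreeGroup in
/-- Relators of the cactus group `J₃`:
`s₁₂² = s₂₃² = s₁₃² = 1`, `s₁₂·s₁₃ = s₁₃·s₂₃`, `s₂₃·s₁₃ = s₁₃·s₁₂`. -/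
def cactusRels : Set (FreeGroup CactusGen) :=
  { of .s12 * of .s12,
    of .s23 * of .s23,
    of .s13 * of .s13,
    of .s12 * of .s13 * (of .s13 * of .s23)⁻¹,
    of .s23 * of .s13 * (of .s13 * of .s12)⁻¹ }

/-- The cactus group `J₃` as a presented group. -/
abbrev J3 : Type := PresentedGroup cactusRels

def s12 : J3 := PresentedGroup.of .s12
def s23 : J3 := PresentedGroup.of .s23
def s13 : J3 := PresentedGroup.of .s13

/-- The subgroup `H = J₃^{2}` of `J₃` generated by `s₁₂` and `s₂₃`. -/
def H : Subgroup J3 := Subgroup.closure {s12, s23}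

lemma mk_rel_eq_one {r : FreeGroup CactusGen} (h : r ∈ cactusRels) :
    PresentedGroup.mk cactusRels r = 1 :=
  (QuotientGroup.eq_one_iff r).mpr (Subgroup.subset_normalClosure h)

lemma s12_sq : s12 * s12 = 1 := by
  have := mk_rel_eq_one (r := FreeGroup.of CactusGen.s12 * FreeGroup.of CactusGen.s12)
    (by simp [cactusRels])
  simpa [map_mul, s12, PresentedGroup.of] using this

lemma s23_sq : s23 * s23 = 1 := by
  have := mk_rel_eq_one (r := FreeGroup.of CactusGen.s23 * FreeGroup.of CactusGen.s23)
    (by simp [cactusRels])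
  simpa [map_mul, s23, PresentedGroup.of] using this

lemma s12_inv : s12⁻¹ = s12 := by
  rw [inv_eq_iff_mul_eq_one]; exact s12_sq
lemma s23_inv : s23⁻¹ = s23 := by
  rw [inv_eq_iff_mul_eq_one]; exact s23_sq

lemma conj_base : s12 * (s12 * s23) * s12 = (s12 * s23)⁻¹ := by
  rw [mul_inv_rev, s12_inv, s23_inv, ← mul_assoc s12 s12 s23, s12_sq, one_mul]

lemma cactusConjZpow (n : ℤ) : s12 * (s12 * s23) ^ n = (s12 * s23) ^ (-n) * s12 := by
  have h := map_zpow (MulAut.conj s12) (s12 * s23) n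
  simp only [MulAut.conj_apply, s12_inv] at h
  have h2 : s12 * (s12 * s23) ^ n * s12 = (s12 * s23) ^ (-n) := by
    rw [h, conj_base, inv_zpow, ← zpow_neg]
  calc s12 * (s12 * s23) ^ n = s12 * (s12 * s23) ^ n * s12 * s12 := by
        rw [mul_assoc, s12_sq, mul_one]
    _ = (s12 * s23) ^ (-n) * s12 := by rw [h2]


/-- The set of normal forms is a subgroup. -/
def K : Subgroup J3 where
  carrier := {h | ∃ p : ℤ × Bool, h = (s12 * s23) ^ p.1 * (cond p.2 s12 1)}
  one_mem' := ⟨(0, false), by simp⟩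
  mul_mem' := by
    rintro a b ⟨⟨n, bn⟩, rfl⟩ ⟨⟨m, bm⟩, rfl⟩
    cases bn with
    | false =>
      cases bm with
      | false => exact ⟨(n + m, false), by simp [zpow_add, mul_assoc]⟩
      | true => exact ⟨(n + m, true), by simp [zpow_add, mul_assoc]⟩
    | true =>
      have key : s12 * ((s12 * s23) ^ m * cond bm s12 1)
          = (s12 * s23) ^ (-m) * (s12 * cond bm s12 1) := by
        rw [← mul_assoc, cactusConjZpow, mul_assoc]
      cases bm with
      | false =>
        refine ⟨(n + -m, true), ?_⟩
        simp only [cond] at key ⊢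
        rw [mul_assoc, key, zpow_add, mul_one, mul_assoc]
      | true =>
        refine ⟨(n + -m, false), ?_⟩
        simp only [cond] at key ⊢
        rw [mul_assoc, key, s12_sq, zpow_add, mul_one, mul_one]
  inv_mem' := by
    rintro a ⟨⟨n, bn⟩, rfl⟩
    cases bn with
    | false => exact ⟨(-n, false), by simp⟩
    | true =>
      refine ⟨(n, true), ?_⟩
      simp only [cond, mul_inv_rev, s12_inv]
      rw [show ((s12*s23)^n)⁻¹ = (s12*s23)^(-n) by rw [← zpow_neg],
        cactusConjZpow (-n), neg_neg]

lemma H_le_K : H ≤ K := by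
  rw [H, Subgroup.closure_le]
  rintro x (rfl | rfl)
  · exact ⟨(0, true), by simp⟩
  · refine ⟨(-1, true), ?_⟩
    simp only [cond, zpow_neg, zpow_one, mul_inv_rev, s12_inv, s23_inv]
    rw [mul_assoc, s12_sq, mul_one]


def rPerm : Equiv.Perm ℤ := Function.Involutive.toPerm (fun x => -x) (fun x => by ring)
def qPerm : Equiv.Perm ℤ := Function.Involutive.toPerm (fun x => 2 - x) (fun x => by ring)
def pPerm : Equiv.Perm ℤ := Function.Involutive.toPerm (fun x => 1 - x) (fun x => by ring)

def cactusToPerm : CactusGen → Equiv.Perm ℤ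
  | .s12 => rPerm
  | .s23 => qPerm
  | .s13 => pPerm

lemma relsHold : ∀ r ∈ cactusRels, FreeGroup.lift cactusToPerm r = 1 := by
  intro r hr
  simp only [cactusRels, Set.mem_insert_iff, Set.mem_singleton_iff] at hr
  rcases hr with rfl | rfl | rfl | rfl | rfl
  · ext x
    simp [cactusToPerm, rPerm, Function.Involutive.coe_toPerm, Function.Involutive.toPerm, Equiv.Perm.mul_apply]
  · ext x
    simp [cactusToPerm, qPerm, Function.Involutive.coe_toPerm, Function.Involutive.toPerm, Equiv.Perm.mul_apply]
  · ext x
    simp [cactusToPerm, pPerm, Function.Involutive.coe_toPerm, Function.Involutive.toPerm, Equiv.Perm.mul_apply]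
  · rw [map_mul, map_inv, mul_inv_eq_one, map_mul, map_mul]
    simp only [FreeGroup.lift_apply_of]
    ext x
    simp [cactusToPerm, rPerm, qPerm, pPerm, Function.Involutive.coe_toPerm, Function.Involutive.toPerm,
      Equiv.Perm.mul_apply]
    omega
  · rw [map_mul, map_inv, mul_inv_eq_one, map_mul, map_mul]
    simp only [FreeGroup.lift_apply_of]
    ext x
    simp [cactusToPerm, rPerm, qPerm, pPerm, Function.Involutive.coe_toPerm, Function.Involutive.toPerm,
      Equiv.Perm.mul_apply]
    omega

def phi : J3 →* Equiv.Perm ℤ := PresentedGroup.toGroup relsHold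

lemma phi_s12 : phi s12 = rPerm := PresentedGroup.toGroup.of relsHold
lemma phi_s23 : phi s23 = qPerm := PresentedGroup.toGroup.of relsHold

lemma t_apply (x : ℤ) : (rPerm * qPerm) x = x - 2 := by
  simp [rPerm, qPerm, Function.Involutive.coe_toPerm, Function.Involutive.toPerm, Equiv.Perm.mul_apply]

lemma t_inv_apply (x : ℤ) : (rPerm * qPerm)⁻¹ x = x + 2 := by
  rw [Equiv.Perm.inv_eq_iff_eq, t_apply]
  ring

lemma t_zpow_apply (n : ℤ) (x : ℤ) : ((rPerm * qPerm) ^ n) x = x - 2 * n := by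
  induction n using Int.induction_on generalizing x with
  | zero => simp
  | succ k ih =>
    rw [zpow_add_one, Equiv.Perm.mul_apply, t_apply, ih]
    ring
  | pred k ih =>
    rw [zpow_sub_one, Equiv.Perm.mul_apply, t_inv_apply, ih]
    ring

lemma phi_form (n : ℤ) (b : Bool) (x : ℤ) :
    phi ((s12 * s23) ^ n * cond b s12 1) x = (cond b (-x) x) - 2 * n := by
  rw [map_mul, map_zpow, map_mul, phi_s12, phi_s23, Equiv.Perm.mul_apply, t_zpow_apply]
  cases b
  · simp
  · simp [phi_s12, rPerm, Function.Involutive.coe_toPerm, Function.Involutive.toPerm]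

/-- every element of `H` is of exactly one of the forms `(s₁₂·s₂₃)ⁿ` or
`(s₁₂·s₂₃)ⁿ·s₁₂` for a unique integer `n`, and the two families are disjoint. -/
theorem H_normal_form :
    ∀ h : J3, h ∈ H → ∃! p : ℤ × Bool, h = (s12 * s23) ^ p.1 * (cond p.2 s12 1) := by
  intro h hh
  obtain ⟨p, hp⟩ := H_le_K hh
  refine ⟨p, hp, ?_⟩
  rintro ⟨m, b⟩ hq
  obtain ⟨n, b'⟩ := p
  rw [hq] at hp
  have h0 := congrArg (fun g => phi g 0) hp
  have h1 := congrArg (fun g => phi g 1) hp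
  simp only [phi_form] at h0 h1
  have hn : m = n := by
    simp only [neg_zero, Bool.cond_self] at h0
    omega
  subst hn
  have hb : b = b' := by
    cases b <;> cases b' <;> simp only [Bool.cond_true, Bool.cond_false] at h1
    · rfl
    · exact absurd h1 (by omega)
    · exact absurd h1 (by omega)
    · rfl
  rw [hb]
end

section
/- The element s₁₃ does not belong to the subgroup H of J₃ generated by s₁₂ and s₂₃, and H has index 2 in J₃; equivalently, for every element x of J₃, either x ∈ H or x·s₁₃ ∈ H, but not both. -/
lemma rel_one {r : FreeGroup CactusGen} (h : r ∈ cactusRels) :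
    (QuotientGroup.mk r : J3) = 1 := by
  rw [QuotientGroup.eq_one_iff]
  exact Subgroup.subset_normalClosure h

lemma s13_sq : s13 * s13 = 1 :=
  rel_one (by simp [cactusRels])

lemma rel1 : s12 * s13 = s13 * s23 := by
  have := rel_one (show FreeGroup.of CactusGen.s12 * FreeGroup.of .s13 *
      (FreeGroup.of .s13 * FreeGroup.of .s23)⁻¹ ∈ cactusRels by simp [cactusRels])
  have h2 : s12 * s13 * (s13 * s23)⁻¹ = 1 := this
  group at h2 ⊢
  exact mul_inv_eq_one.mp (by group at h2 ⊢; exact h2)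

lemma rel2 : s23 * s13 = s13 * s12 := by
  have := rel_one (show FreeGroup.of CactusGen.s23 * FreeGroup.of .s13 *
      (FreeGroup.of .s13 * FreeGroup.of .s12)⁻¹ ∈ cactusRels by simp [cactusRels])
  have h2 : s23 * s13 * (s13 * s12)⁻¹ = 1 := this
  exact mul_inv_eq_one.mp (by group at h2 ⊢; exact h2)

/-- the sign homomorphism -/
noncomputable def φ : J3 →* Multiplicative (ZMod 2) :=
  PresentedGroup.toGroup (f := fun g => match g with
    | .s12 => 1
    | .s23 => 1
    | .s13 => Multiplicative.ofAdd 1) (by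
      intro r hr
      rcases hr with h | h | h | h | h <;> subst h <;> simp <;> decide)

lemma φ_s12 : φ s12 = 1 := PresentedGroup.toGroup.of _
lemma φ_s23 : φ s23 = 1 := PresentedGroup.toGroup.of _
lemma φ_s13 : φ s13 = Multiplicative.ofAdd 1 := PresentedGroup.toGroup.of _

lemma H_le_ker : H ≤ φ.ker := by
  rw [H, Subgroup.closure_le]
  rintro x (rfl | rfl) <;> simp [MonoidHom.mem_ker, φ_s12, φ_s23]

lemma s13_inv : s13⁻¹ = s13 := by
  rw [inv_eq_iff_mul_eq_one]; exact s13_sq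

lemma ss (x : J3) : s13 * (s13 * x) = x := by
  rw [← mul_assoc, s13_sq, one_mul]

lemma conj_mem {h : J3} (hh : h ∈ H) : s13 * h * s13 ∈ H := by
  induction hh using Subgroup.closure_induction with
  | mem x hx =>
    rcases hx with rfl | rfl
    · have : s13 * s12 * s13 = s23 := by
        rw [← rel2, mul_assoc, s13_sq, mul_one]
      rw [this]; exact Subgroup.subset_closure (by simp)
    · have : s13 * s23 * s13 = s12 := by
        rw [show s13 * s23 = s12 * s13 from rel1.symm, mul_assoc, s13_sq, mul_one]
      rw [this]; exact Subgroup.subset_closure (by simp)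
  | one => simp only [mul_one, s13_sq]; exact H.one_mem
  | mul a b _ _ ha hb =>
    have : s13 * (a * b) * s13 = (s13 * a * s13) * (s13 * b * s13) := by
      simp only [mul_assoc, ss]
    rw [this]; exact H.mul_mem ha hb
  | inv a _ ha =>
    have : s13 * a⁻¹ * s13 = (s13 * a * s13)⁻¹ := by
      simp only [mul_inv_rev, s13_inv, mul_assoc]
    rw [this]; exact H.inv_mem ha

lemma cover (x : J3) : x ∈ H ∨ x * s13 ∈ H := by
  have htop : x ∈ Subgroup.closure (Set.range (PresentedGroup.of : CactusGen → J3)) := by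
    rw [PresentedGroup.closure_range_of]; trivial
  induction htop using Subgroup.closure_induction with
  | mem y hy =>
    obtain ⟨g, rfl⟩ := hy
    cases g with
    | s12 => exact Or.inl (Subgroup.subset_closure (by simp [s12]))
    | s23 => exact Or.inl (Subgroup.subset_closure (by simp [s23]))
    | s13 =>
      refine Or.inr ?_
      rw [show PresentedGroup.of CactusGen.s13 = s13 from rfl, s13_sq]
      exact H.one_mem
  | one => exact Or.inl H.one_mem
  | mul a b _ _ ha hb =>
    rcases ha with ha | ha <;> rcases hb with hb | hb
    · exact Or.inl (H.mul_mem ha hb)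
    · exact Or.inr (by rw [mul_assoc]; exact H.mul_mem ha hb)
    · refine Or.inr ?_
      have : a * b * s13 = (a * s13) * (s13 * b * s13) := by
        simp only [mul_assoc, ss]
      rw [this]; exact H.mul_mem ha (conj_mem hb)
    · refine Or.inl ?_
      have : a * b = (a * s13) * (s13 * (b * s13) * s13) := by
        simp only [mul_assoc, ss, s13_sq, mul_one]
      rw [this]; exact H.mul_mem ha (conj_mem hb)
  | inv a _ ha =>
    rcases ha with ha | ha
    · exact Or.inl (H.inv_mem ha)
    · refine Or.inr ?_
      have : a⁻¹ * s13 = s13 * (a * s13)⁻¹ * s13 := by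
        simp only [mul_inv_rev, s13_inv, mul_assoc, ss]
      rw [this]; exact conj_mem (H.inv_mem ha)

/-- `s₁₃ ∉ H`, and `H` has index 2 in `J₃`; equivalently, for every `x ∈ J₃`,
either `x ∈ H` or `x·s₁₃ ∈ H`, but not both. -/
theorem s13_not_mem_H_and_index_two :
    s13 ∉ H ∧ H.index = 2 ∧ ∀ x : J3, Xor' (x ∈ H) (x * s13 ∈ H) := by
  have hnotboth : ∀ x : J3, ¬(x ∈ H ∧ x * s13 ∈ H) := by
    rintro x ⟨h1, h2⟩
    have e1 : φ x = 1 := H_le_ker h1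
    have e2 : φ (x * s13) = 1 := H_le_ker h2
    rw [map_mul, e1, one_mul, φ_s13] at e2
    exact absurd e2 (by decide)
  have hxor : ∀ x : J3, Xor' (x ∈ H) (x * s13 ∈ H) := by
    intro x
    rcases cover x with h | h
    · exact Or.inl ⟨h, fun h' => hnotboth x ⟨h, h'⟩⟩
    · exact Or.inr ⟨h, fun h' => hnotboth x ⟨h', h⟩⟩
  refine ⟨?_, ?_, hxor⟩
  · intro h
    exact hnotboth 1 ⟨H.one_mem, by rwa [one_mul]⟩
  · rw [Subgroup.index_eq_two_iff]
    exact ⟨s13, fun b => (hxor b).symm⟩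
end
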